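/- For every n ≥ 2 and every point x ∈ ℝ^n, writing Q = ℝ₊^{n−1} × ℝ, the point x admits the decomposition x = P_{K_2^n}(P_Q(x)) + P_{−K_2^n}(P_Q(x)) + P_{Q°}(x), where the three summands are mutually orthogonal. -/

import Mathlib

open Metric Set
open scoped Pointwise

/-- The second-order cone `K₂ⁿ = {x ∈ ℝⁿ : ‖(x₁, …, x_{n−1})‖₂ ≤ x_n}`, with `n = m + 1`. -/
def soc (m : ℕ) : Set (EuclideanSpace ℝ (Fin (m + 1))) :=
  {x | Real.sqrt (∑ i : Fin m, x (Fin.castSucc i) ^ 2) ≤ x (Fin.last m)}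

/-- The non-negative orthant `ℝ₊ⁿ`, with `n = m + 1`. -/
def orthant (m : ℕ) : Set (EuclideanSpace ℝ (Fin (m + 1))) :=
  {x | ∀ i, 0 ≤ x i}

/-- The set `Q = ℝ₊^{n−1} × ℝ`, with `n = m + 1`. -/
def halfOrthant (m : ℕ) : Set (EuclideanSpace ℝ (Fin (m + 1))) :=
  {x | ∀ i : Fin m, 0 ≤ x (Fin.castSucc i)}

/-- `y` is the Euclidean (metric) projection of `x` onto `C`: it is the point of `C`
closest to `x`. -/
def IsProjOn {p : ℕ} (C : Set (EuclideanSpace ℝ (Fin p)))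
    (x y : EuclideanSpace ℝ (Fin p)) : Prop :=
  y ∈ C ∧ ∀ z ∈ C, ‖x - y‖ ≤ ‖x - z‖

/-- The polar cone `K° = {y : ⟨x, y⟩ ≤ 0 for all x ∈ K}`. -/
def polarCone {p : ℕ} (K : Set (EuclideanSpace ℝ (Fin p))) :
    Set (EuclideanSpace ℝ (Fin p)) :=
  {y | ∀ x ∈ K, (inner ℝ x y : ℝ) ≤ 0}

-- helpers
lemma inner_eq {p : ℕ} (x y : EuclideanSpace ℝ (Fin p)) : (inner ℝ x y : ℝ) = ∑ i, x i * y i := by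
  simp [PiLp.inner_apply, RCLike.inner_apply, mul_comm]

lemma norm_eq' {p : ℕ} (x : EuclideanSpace ℝ (Fin p)) : ‖x‖ = Real.sqrt (∑ i, x i ^ 2) :=
  (EuclideanSpace.norm_eq x).trans (by simp [sq])

lemma norm_le_of_sq {p : ℕ} (a b : EuclideanSpace ℝ (Fin p))
    (h : ∑ i, a i ^ 2 ≤ ∑ i, b i ^ 2) : ‖a‖ ≤ ‖b‖ := by
  rw [norm_eq', norm_eq']; exact Real.sqrt_le_sqrt h

lemma norm_le_of_sq' {p : ℕ} {a b : EuclideanSpace ℝ (Fin p)}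
    (h : ‖a‖ ^ 2 ≤ ‖b‖ ^ 2) : ‖a‖ ≤ ‖b‖ := by
  have := Real.sqrt_le_sqrt h
  rwa [Real.sqrt_sq (norm_nonneg _), Real.sqrt_sq (norm_nonneg _)] at this

-- variational inequality (necessity)
lemma vi {p : ℕ} {C : Set (EuclideanSpace ℝ (Fin p))} (hC : Convex ℝ C)
    {x y : EuclideanSpace ℝ (Fin p)} (h : IsProjOn C x y) :
    ∀ z ∈ C, (inner ℝ (x - y) (z - y) : ℝ) ≤ 0 := by
  intro z hz
  set a : ℝ := (inner ℝ (x - y) (z - y) : ℝ) with ha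
  by_contra hpos
  push_neg at hpos
  set c : ℝ := ‖z - y‖ ^ 2 with hc
  have hc0 : 0 ≤ c := sq_nonneg _
  set t : ℝ := min 1 (a / (c + 1)) with ht
  have ht0 : 0 < t := lt_min one_pos (div_pos hpos (by linarith))
  have ht1 : t ≤ 1 := min_le_left _ _
  have hmem : y + t • (z - y) ∈ C := by
    have := hC h.1 hz (a := 1 - t) (b := t) (by linarith) ht0.le (by ring)
    convert this using 1
    module
  have hle := h.2 _ hmem
  have hsq : ‖x - y‖ ^ 2 ≤ ‖x - (y + t • (z - y))‖ ^ 2 := by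
    have := h.2 _ hmem
    nlinarith [norm_nonneg (x - y), norm_nonneg (x - (y + t • (z - y)))]
  have hexp : ‖x - (y + t • (z - y))‖ ^ 2 = ‖x - y‖ ^ 2 - 2 * t * a + t ^ 2 * c := by
    have e : x - (y + t • (z - y)) = (x - y) - t • (z - y) := by abel
    rw [e, norm_sub_sq_real, real_inner_smul_right, norm_smul]
    simp [hc, ha, mul_pow, abs_of_pos ht0]
    ring
  have key : 2 * a ≤ t * c := by nlinarith
  have htc : t * c ≤ a * c / (c + 1) := by
    have : t ≤ a / (c + 1) := min_le_right _ _
    calc t * c ≤ (a / (c + 1)) * c := by nlinarith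
    _ = a * c / (c + 1) := by ring
  have : a * c / (c + 1) < 2 * a := by
    rw [div_lt_iff₀ (by linarith)]
    nlinarith
  linarith

lemma proj_unique {p : ℕ} {C : Set (EuclideanSpace ℝ (Fin p))} (hC : Convex ℝ C)
    {x y y' : EuclideanSpace ℝ (Fin p)} (h : IsProjOn C x y) (h' : IsProjOn C x y') : y = y' := by
  have h1 := vi hC h y' h'.1
  have h2 := vi hC h' y h.1
  have e : (y' - y : EuclideanSpace ℝ (Fin p)) = (x - y) - (x - y') := by abel
  have key : (inner ℝ (y' - y) (y' - y) : ℝ)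
      = (inner ℝ (x - y) (y' - y) : ℝ) - (inner ℝ (x - y') (y' - y) : ℝ) := by
    rw [← inner_sub_left, ← e]
  have h2' : (inner ℝ (x - y') (y' - y) : ℝ) = -(inner ℝ (x - y') (y - y') : ℝ) := by
    rw [← inner_neg_right]; congr 1; abel
  have hnn : (inner ℝ (y' - y) (y' - y) : ℝ) ≤ 0 := by rw [key]; rw [h2']; linarith
  have : ‖y' - y‖ ^ 2 ≤ 0 := by rwa [real_inner_self_eq_norm_sq] at hnn
  have : y' - y = 0 := by
    have := norm_le_zero_iff.mp (by nlinarith [norm_nonneg (y' - y)])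
    exact this
  symm; rwa [sub_eq_zero] at this

-- head map
def hd {m : ℕ} (z : EuclideanSpace ℝ (Fin (m+1))) : EuclideanSpace ℝ (Fin m) :=
  WithLp.toLp 2 (fun i : Fin m => z i.castSucc)

lemma hd_norm {m : ℕ} (z : EuclideanSpace ℝ (Fin (m+1))) :
    ‖hd z‖ = Real.sqrt (∑ i : Fin m, z i.castSucc ^ 2) := by
  rw [norm_eq']; rfl

lemma mem_soc_iff {m : ℕ} {z : EuclideanSpace ℝ (Fin (m+1))} :
    z ∈ soc m ↔ ‖hd z‖ ≤ z (Fin.last m) := by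
  rw [soc, Set.mem_setOf_eq, hd_norm]

lemma soc_convex (m : ℕ) : Convex ℝ (soc m) := by
  intro z hz z' hz' a b ha hb hab
  rw [mem_soc_iff] at *
  have he : hd (a • z + b • z') = a • hd z + b • hd z' := rfl
  have hlast : (a • z + b • z') (Fin.last m) = a * z (Fin.last m) + b * z' (Fin.last m) := rfl
  rw [he, hlast]
  calc ‖a • hd z + b • hd z'‖ ≤ a * ‖hd z‖ + b * ‖hd z'‖ := by
        refine (norm_add_le _ _).trans ?_
        rw [norm_smul, norm_smul, Real.norm_eq_abs, Real.norm_eq_abs,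
          abs_of_nonneg ha, abs_of_nonneg hb]
    _ ≤ a * z (Fin.last m) + b * z' (Fin.last m) := by
        gcongr <;> assumption

lemma halfOrthant_convex (m : ℕ) : Convex ℝ (halfOrthant m) := by
  intro z hz z' hz' a b ha hb hab i
  have : (a • z + b • z') i.castSucc = a * z i.castSucc + b * z' i.castSucc := rfl
  rw [this]
  exact add_nonneg (mul_nonneg ha (hz i)) (mul_nonneg hb (hz' i))

lemma polarCone_convex {p : ℕ} (K : Set (EuclideanSpace ℝ (Fin p))) :
    Convex ℝ (polarCone K) := by
  intro z hz z' hz' a b ha hb hab w hw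
  have : (inner ℝ w (a • z + b • z') : ℝ) = a * inner ℝ w z + b * inner ℝ w z' := by
    rw [inner_add_right, real_inner_smul_right, real_inner_smul_right]
  rw [this]
  exact add_nonpos (mul_nonpos_of_nonneg_of_nonpos ha (hz w hw))
    (mul_nonpos_of_nonneg_of_nonpos hb (hz' w hw))

lemma zero_mem_soc (m : ℕ) : (0 : EuclideanSpace ℝ (Fin (m+1))) ∈ soc m := by
  rw [mem_soc_iff]; simp [hd]; rfl

lemma smul_mem_soc {m : ℕ} {z : EuclideanSpace ℝ (Fin (m+1))} (hz : z ∈ soc m) {c : ℝ}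
    (hc : 0 ≤ c) : c • z ∈ soc m := by
  rw [mem_soc_iff] at *
  have he : hd (c • z) = c • hd z := rfl
  have hlast : (c • z) (Fin.last m) = c * z (Fin.last m) := rfl
  rw [he, hlast, norm_smul, Real.norm_eq_abs, abs_of_nonneg hc]
  exact mul_le_mul_of_nonneg_left hz hc

-- inner product of two soc elements is nonneg
lemma soc_pairing {m : ℕ} {a b : EuclideanSpace ℝ (Fin (m+1))}
    (ha : a ∈ soc m) (hb : b ∈ soc m) : 0 ≤ (inner ℝ a b : ℝ) := by
  rw [mem_soc_iff] at ha hb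
  have h1 : (inner ℝ a b : ℝ) = (inner ℝ (hd a) (hd b) : ℝ) + a (Fin.last m) * b (Fin.last m) := by
    rw [inner_eq, inner_eq, Fin.sum_univ_castSucc]; rfl
  have h2 : |(inner ℝ (hd a) (hd b) : ℝ)| ≤ ‖hd a‖ * ‖hd b‖ := abs_real_inner_le_norm _ _
  have h3 : ‖hd a‖ * ‖hd b‖ ≤ a (Fin.last m) * b (Fin.last m) := by
    have := norm_nonneg (hd a); have := norm_nonneg (hd b)
    nlinarith
  rw [h1]
  have := abs_le.mp h2
  linarith

-- polar of soc is contained in -soc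
lemma polar_soc_subset {m : ℕ} {y : EuclideanSpace ℝ (Fin (m+1))}
    (hy : ∀ z ∈ soc m, (inner ℝ z y : ℝ) ≤ 0) : y ∈ -soc m := by
  rw [Set.mem_neg, mem_soc_iff]
  have hne : hd (-y) = -hd y := rfl
  have hlast : (-y) (Fin.last m) = -(y (Fin.last m)) := rfl
  rw [hne, hlast, norm_neg]
  -- test vector e_last
  have h1 : y (Fin.last m) ≤ 0 := by
    have hmem : EuclideanSpace.single (Fin.last m) (1:ℝ) ∈ soc m := by
      rw [mem_soc_iff]
      have : hd (EuclideanSpace.single (Fin.last m) (1:ℝ)) = 0 := by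
        ext i
        simp [hd, EuclideanSpace.single_apply, (Fin.castSucc_lt_last i).ne]
      rw [this]
      simp [EuclideanSpace.single_apply]
    have := hy _ hmem
    rw [inner_eq] at this
    simpa [EuclideanSpace.single_apply] using this
  -- test vector (hd y, ‖hd y‖)
  have h2 : ‖hd y‖ * ‖hd y‖ + ‖hd y‖ * y (Fin.last m) ≤ 0 := by
    set z : EuclideanSpace ℝ (Fin (m+1)) := WithLp.toLp 2 (Fin.snoc (WithLp.ofLp (hd y)) ‖hd y‖) with hz
    have hzc : ∀ i : Fin m, z i.castSucc = y i.castSucc := fun i =>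
      Fin.snoc_castSucc (α := fun _ => ℝ) ‖hd y‖ (WithLp.ofLp (hd y)) i
    have hzl : z (Fin.last m) = ‖hd y‖ := Fin.snoc_last (α := fun _ => ℝ) ‖hd y‖ (WithLp.ofLp (hd y))
    have hmem : z ∈ soc m := by
      rw [mem_soc_iff, hzl]
      have : hd z = hd y := congrArg (WithLp.toLp 2) (funext hzc)
      rw [this]
    have := hy _ hmem
    rw [inner_eq, Fin.sum_univ_castSucc] at this
    have hsum : ∑ i : Fin m, z i.castSucc * y i.castSucc = ‖hd y‖ * ‖hd y‖ := by
      rw [← real_inner_self_eq_norm_mul_norm, inner_eq]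
      exact Finset.sum_congr rfl fun i _ => by rw [hzc i]; rfl
    rw [hsum, hzl] at this
    linarith
  by_cases hz : ‖hd y‖ = 0
  · rw [hz]; linarith
  · have hpos : 0 < ‖hd y‖ := lt_of_le_of_ne (norm_nonneg _) (Ne.symm hz)
    nlinarith

-- explicit projection onto halfOrthant
noncomputable def projQ {m : ℕ} (x : EuclideanSpace ℝ (Fin (m+1))) :
    EuclideanSpace ℝ (Fin (m+1)) :=
  WithLp.toLp 2 (Fin.snoc (α := fun _ => ℝ) (fun i => max (x i.castSucc) 0) (x (Fin.last m)))

lemma projQ_castSucc {m : ℕ} (x : EuclideanSpace ℝ (Fin (m+1))) (i : Fin m) :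
    projQ x i.castSucc = max (x i.castSucc) 0 :=
  Fin.snoc_castSucc (α := fun _ => ℝ) (x (Fin.last m)) (fun i : Fin m => max (x i.castSucc) 0) i

lemma projQ_last {m : ℕ} (x : EuclideanSpace ℝ (Fin (m+1))) :
    projQ x (Fin.last m) = x (Fin.last m) :=
  Fin.snoc_last (α := fun _ => ℝ) (x (Fin.last m)) (fun i : Fin m => max (x i.castSucc) 0)

lemma isProjOn_projQ {m : ℕ} (x : EuclideanSpace ℝ (Fin (m+1))) :
    IsProjOn (halfOrthant m) x (projQ x) := by
  constructor
  · intro i; rw [projQ_castSucc]; exact le_max_right _ _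
  · intro z hz
    refine norm_le_of_sq _ _ ?_
    rw [Fin.sum_univ_castSucc, Fin.sum_univ_castSucc]
    have hlt : ((x - projQ x) (Fin.last m)) ^ 2 = 0 := by
      have : (x - projQ x) (Fin.last m) = x (Fin.last m) - projQ x (Fin.last m) := rfl
      rw [this, projQ_last]; ring
    rw [hlt]
    have hsum : ∀ i : Fin m, ((x - projQ x) i.castSucc) ^ 2 ≤ ((x - z) i.castSucc) ^ 2 := by
      intro i
      have e1 : (x - projQ x) i.castSucc = x i.castSucc - max (x i.castSucc) 0 := by
        rw [show (x - projQ x) i.castSucc = x i.castSucc - projQ x i.castSucc from rfl,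
          projQ_castSucc]
      have e2 : (x - z) i.castSucc = x i.castSucc - z i.castSucc := rfl
      rw [e1, e2]
      rcases le_or_gt 0 (x i.castSucc) with h | h
      · rw [max_eq_left h]; simpa using sq_nonneg (x i.castSucc - z i.castSucc)
      · rw [max_eq_right h.le]; have := hz i; nlinarith
    have := Finset.sum_le_sum (s := (Finset.univ : Finset (Fin m))) (fun i _ => hsum i)
    have hnn : (0:ℝ) ≤ ((x - z) (Fin.last m)) ^ 2 := sq_nonneg _
    linarith

lemma isProjOn_projW {m : ℕ} (x : EuclideanSpace ℝ (Fin (m+1))) :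
    IsProjOn (polarCone (halfOrthant m)) x (x - projQ x) := by
  constructor
  · intro z hz
    rw [inner_eq, Fin.sum_univ_castSucc]
    have hlt : z (Fin.last m) * (x - projQ x) (Fin.last m) = 0 := by
      have : (x - projQ x) (Fin.last m) = x (Fin.last m) - projQ x (Fin.last m) := rfl
      rw [this, projQ_last]; ring
    rw [hlt, add_zero]
    refine Finset.sum_nonpos fun i _ => ?_
    have e1 : (x - projQ x) i.castSucc = x i.castSucc - max (x i.castSucc) 0 := by
      rw [show (x - projQ x) i.castSucc = x i.castSucc - projQ x i.castSucc from rfl,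
        projQ_castSucc]
    rw [e1]
    exact mul_nonpos_of_nonneg_of_nonpos (hz i) (sub_nonpos.mpr (le_max_left _ _))
  · intro z hz
    -- facts about z ∈ polarCone (halfOrthant m)
    have hinner : ∀ y : EuclideanSpace ℝ (Fin (m+1)), y ∈ halfOrthant m →
        (∑ i : Fin m, y i.castSucc * z i.castSucc) + y (Fin.last m) * z (Fin.last m) ≤ 0 := by
      intro y hy
      have := hz y hy
      rwa [inner_eq, Fin.sum_univ_castSucc] at this
    have hsnoc : ∀ c : ℝ, WithLp.toLp 2 (Fin.snoc 0 c : Fin (m+1) → ℝ) ∈ halfOrthant m := by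
      intro c i
      have : (WithLp.toLp 2 (Fin.snoc (0 : Fin m → ℝ) c : Fin (m+1) → ℝ) : EuclideanSpace ℝ (Fin (m+1))) i.castSucc = 0 :=
        Fin.snoc_castSucc (α := fun _ => ℝ) c (0 : Fin m → ℝ) i
      rw [this]
    have hzl : z (Fin.last m) = 0 := by
      have h1 := hinner _ (hsnoc 1)
      have h2 := hinner _ (hsnoc (-1))
      simp only [WithLp.ofLp_toLp, Fin.snoc_castSucc, Fin.snoc_last, Pi.zero_apply, zero_mul,
        Finset.sum_const_zero, zero_add, one_mul, neg_one_mul, neg_nonpos] at h1 h2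
      linarith
    have hzc : ∀ i : Fin m, z i.castSucc ≤ 0 := by
      intro i
      have hmem : EuclideanSpace.single i.castSucc (1:ℝ) ∈ halfOrthant m := by
        intro j
        simp [EuclideanSpace.single_apply]
        split <;> norm_num
      have := hinner _ hmem
      have hls : EuclideanSpace.single i.castSucc (1:ℝ) (Fin.last m) = 0 := by
        simp [EuclideanSpace.single_apply, ((Fin.castSucc_lt_last i).ne).symm]
      rw [hls, zero_mul, add_zero] at this
      calc z i.castSucc = ∑ j : Fin m, EuclideanSpace.single i.castSucc (1:ℝ) j.castSucc
            * z j.castSucc := by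
            rw [Finset.sum_eq_single i]
            · simp [EuclideanSpace.single_apply]
            · intro j _ hj
              have hne : (j.castSucc : Fin (m+1)) ≠ i.castSucc :=
                fun h => hj (Fin.castSucc_injective m h)
              simp [EuclideanSpace.single_apply, hne]
            · simp
        _ ≤ 0 := this
    -- now coordinatewise comparison
    refine norm_le_of_sq _ _ ?_
    rw [Fin.sum_univ_castSucc, Fin.sum_univ_castSucc]
    have hlast : ((x - (x - projQ x)) (Fin.last m)) ^ 2 = ((x - z) (Fin.last m)) ^ 2 := by
      have e1 : (x - (x - projQ x)) (Fin.last m) = projQ x (Fin.last m) := by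
        show x (Fin.last m) - (x (Fin.last m) - projQ x (Fin.last m)) = _; ring
      have e2 : (x - z) (Fin.last m) = x (Fin.last m) - z (Fin.last m) := rfl
      rw [e1, e2, projQ_last, hzl, sub_zero]
    have hcs : ∀ i : Fin m,
        ((x - (x - projQ x)) i.castSucc) ^ 2 ≤ ((x - z) i.castSucc) ^ 2 := by
      intro i
      have e1 : (x - (x - projQ x)) i.castSucc = max (x i.castSucc) 0 := by
        show x i.castSucc - (x i.castSucc - projQ x i.castSucc) = _
        rw [projQ_castSucc]; ring
      have e2 : (x - z) i.castSucc = x i.castSucc - z i.castSucc := rfl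
      rw [e1, e2]
      rcases le_or_gt (x i.castSucc) 0 with h | h
      · rw [max_eq_right h]; have := hzc i; nlinarith
      · rw [max_eq_left h.le]; have := hzc i; nlinarith
    have := Finset.sum_le_sum (s := (Finset.univ : Finset (Fin m))) (fun i _ => hcs i)
    linarith

-- flipping the sign of a zero-coordinate of the base point fixes the projection
lemma flip_zero {m : ℕ} {K : Set (EuclideanSpace ℝ (Fin (m+1)))} (hK : Convex ℝ K)
    (j : Fin (m+1))
    (hKf : ∀ z ∈ K, (WithLp.toLp 2 (fun i => if i = j then -(z j) else z i) : EuclideanSpace ℝ (Fin (m+1))) ∈ K)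
    {q y : EuclideanSpace ℝ (Fin (m+1))} (hqj : q j = 0) (h : IsProjOn K q y) : y j = 0 := by
  set yt : EuclideanSpace ℝ (Fin (m+1)) := WithLp.toLp 2 (fun i => if i = j then -(y j) else y i) with hyt
  have hnorm : ‖q - yt‖ = ‖q - y‖ := by
    rw [norm_eq', norm_eq']
    congr 1
    refine Finset.sum_congr rfl fun i _ => ?_
    have e : (q - yt) i = q i - yt i := rfl
    have e' : (q - y) i = q i - y i := rfl
    rw [e, e']
    rcases eq_or_ne i j with rfl | hij
    · rw [hqj]; simp [hyt]
    · simp [hyt, hij]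
  have hproj : IsProjOn K q yt := ⟨hKf y h.1, fun z hz => hnorm.le.trans (h.2 z hz)⟩
  have := proj_unique hK h hproj
  have := congrArg (fun v : EuclideanSpace ℝ (Fin (m+1)) => v j) this
  simp [hyt] at this
  linarith

lemma soc_flip {m : ℕ} (i0 : Fin m) :
    ∀ z ∈ soc m, (WithLp.toLp 2 (fun i => if i = i0.castSucc then -(z i0.castSucc) else z i) :
      EuclideanSpace ℝ (Fin (m+1))) ∈ soc m := by
  intro z hz
  rw [mem_soc_iff] at hz ⊢
  set zt : EuclideanSpace ℝ (Fin (m+1)) :=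
    WithLp.toLp 2 (fun i => if i = i0.castSucc then -(z i0.castSucc) else z i) with hzt
  have hlast : zt (Fin.last m) = z (Fin.last m) := by
    simp [hzt, ((Fin.castSucc_lt_last i0).ne).symm]
  have hn : ‖hd zt‖ = ‖hd z‖ := by
    rw [hd_norm, hd_norm]
    congr 1
    refine Finset.sum_congr rfl fun i _ => ?_
    rcases eq_or_ne i i0 with rfl | hij
    · simp [hzt]
    · have : (i.castSucc : Fin (m+1)) ≠ i0.castSucc := fun h => hij (Fin.castSucc_injective m h)
      simp [hzt, this]
  show ‖hd zt‖ ≤ zt (Fin.last m); rw [hlast, hn]; exact hz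

lemma neg_soc_flip {m : ℕ} (i0 : Fin m) :
    ∀ z ∈ -soc m, (WithLp.toLp 2 (fun i => if i = i0.castSucc then -(z i0.castSucc) else z i) :
      EuclideanSpace ℝ (Fin (m+1))) ∈ -soc m := by
  intro z hz
  rw [Set.mem_neg] at hz ⊢
  have h1 := soc_flip i0 (-z) hz
  have heq : (-(WithLp.toLp 2 (fun i => if i = i0.castSucc then -(z i0.castSucc) else z i)) :
      EuclideanSpace ℝ (Fin (m+1)))
      = (WithLp.toLp 2 (fun i => if i = i0.castSucc then -((-z : EuclideanSpace ℝ (Fin (m+1))) i0.castSucc)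
          else (-z : EuclideanSpace ℝ (Fin (m+1))) i) : EuclideanSpace ℝ (Fin (m+1))) := by
    ext i
    show -(if i = i0.castSucc then -(z i0.castSucc) else z i)
        = if i = i0.castSucc then -((-z : EuclideanSpace ℝ (Fin (m+1))) i0.castSucc)
          else (-z : EuclideanSpace ℝ (Fin (m+1))) i
    have hneg : ∀ k, (-z : EuclideanSpace ℝ (Fin (m+1))) k = -(z k) := fun _ => rfl
    rcases eq_or_ne i i0.castSucc with rfl | hij
    · simp [hneg]
    · simp [hij, hneg]
  rw [heq]
  exact h1

/-- Orthogonal decomposition: with `Q = ℝ₊^{n−1} × ℝ` (`n = m + 1 ≥ 2`), every `x ∈ ℝⁿ`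
decomposes as `x = P_{K₂ⁿ}(P_Q(x)) + P_{−K₂ⁿ}(P_Q(x)) + P_{Q°}(x)` with the three summands
mutually orthogonal. -/
theorem orthogonal_decomposition_soc
    (m : ℕ) (hm : 1 ≤ m) (x q u v w : EuclideanSpace ℝ (Fin (m + 1)))
    (hq : IsProjOn (halfOrthant m) x q)
    (hu : IsProjOn (soc m) q u)
    (hv : IsProjOn (-soc m) q v)
    (hw : IsProjOn (polarCone (halfOrthant m)) x w) :
    x = u + v + w ∧ (inner ℝ u v : ℝ) = 0 ∧ (inner ℝ u w : ℝ) = 0 ∧ (inner ℝ v w : ℝ) = 0 := by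
  have hcs := soc_convex m
  -- identify q and w
  have hqe : q = projQ x := proj_unique (halfOrthant_convex m) hq (isProjOn_projQ x)
  have hwe : w = x - projQ x := proj_unique (polarCone_convex _) hw (isProjOn_projW x)
  -- Moreau: v = q - u
  have hVIu := vi hcs hu
  have hinneru : (inner ℝ (q - u) u : ℝ) = 0 := by
    have h0 := hVIu 0 (zero_mem_soc m)
    have h2 := hVIu ((2:ℝ) • u) (smul_mem_soc hu.1 (by norm_num))
    have e0 : ((0 : EuclideanSpace ℝ (Fin (m+1))) - u) = -u := by abel
    have e2 : (((2:ℝ) • u : EuclideanSpace ℝ (Fin (m+1))) - u) = u := by module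
    rw [e0, inner_neg_right] at h0
    rw [e2] at h2
    linarith
  have hpolar : ∀ z ∈ soc m, (inner ℝ z (q - u) : ℝ) ≤ 0 := by
    intro z hz
    have := hVIu z hz
    rw [inner_sub_right, hinneru, sub_zero] at this
    rwa [real_inner_comm]
  have hrmem : q - u ∈ -soc m := polar_soc_subset hpolar
  have hrproj : IsProjOn (-soc m) q (q - u) := by
    refine ⟨hrmem, fun z hz => ?_⟩
    have e : q - (q - u) = u := by abel
    rw [e]
    refine norm_le_of_sq' ?_
    have e2 : q - z = u + ((q - u) - z) := by abel
    rw [e2, norm_add_sq_real]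
    have hzs : -z ∈ soc m := Set.mem_neg.mp hz
    have hpz : 0 ≤ (inner ℝ u (-z) : ℝ) := soc_pairing hu.1 hzs
    rw [inner_neg_right] at hpz
    have hir : (inner ℝ u (q - u) : ℝ) = 0 := by rw [real_inner_comm]; exact hinneru
    have : (inner ℝ u ((q - u) - z) : ℝ) = (inner ℝ u (q - u) : ℝ) - (inner ℝ u z : ℝ) :=
      inner_sub_right _ _ _
    nlinarith [sq_nonneg ‖(q - u) - z‖, norm_nonneg ((q - u) - z)]
  have hve : v = q - u := proj_unique hcs.neg hv hrproj
  -- coordinates of w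
  have hwlast : w (Fin.last m) = 0 := by
    rw [hwe]
    show x (Fin.last m) - projQ x (Fin.last m) = 0
    rw [projQ_last]; ring
  have hwcs : ∀ i : Fin m, w i.castSucc = x i.castSucc - max (x i.castSucc) 0 := by
    intro i
    rw [hwe]
    show x i.castSucc - projQ x i.castSucc = _
    rw [projQ_castSucc]
  -- key: coordinates of u and v vanish where q vanishes
  have hq0 : ∀ i : Fin m, x i.castSucc < 0 → q i.castSucc = 0 := by
    intro i hi
    rw [hqe, projQ_castSucc, max_eq_right hi.le]
  have hu0 : ∀ i : Fin m, x i.castSucc < 0 → u i.castSucc = 0 := fun i hi =>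
    flip_zero hcs i.castSucc (soc_flip i) (hq0 i hi) hu
  have hv0 : ∀ i : Fin m, x i.castSucc < 0 → v i.castSucc = 0 := fun i hi =>
    flip_zero hcs.neg i.castSucc (neg_soc_flip i) (hq0 i hi) hv
  -- orthogonality with w
  have horthw : ∀ y : EuclideanSpace ℝ (Fin (m+1)),
      (∀ i : Fin m, x i.castSucc < 0 → y i.castSucc = 0) → (inner ℝ y w : ℝ) = 0 := by
    intro y hy
    rw [inner_eq, Fin.sum_univ_castSucc, hwlast, mul_zero, add_zero]
    refine Finset.sum_eq_zero fun i _ => ?_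
    rcases lt_or_ge (x i.castSucc) 0 with h | h
    · rw [hy i h, zero_mul]
    · rw [hwcs i, max_eq_left h, sub_self, mul_zero]
  refine ⟨?_, ?_, horthw u hu0, horthw v hv0⟩
  · rw [hve, hwe, hqe]; abel
  · rw [hve, real_inner_comm]; exact hinneru
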